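/- Bias consistency (deterministic form of Theorem 1): let (X,Y) ~ D with Y ∈ [0,1] and conditional mean Q†(x) = E[Y | X = x] taking values in (0,1) a.s. Suppose (i) sup_{Q ∈ 𝒬} |R(Q) − R̂_S(Q)| ≤ ε_gen, (ii) Q_θ ∈ 𝒬 satisfies R̂_S(Q_θ) ≤ inf_{Q ∈ 𝒬} R̂_S(Q) + ε_opt, and (iii) the in-class approximation error is ε_approx = inf_{Q ∈ 𝒬} R(Q) − R(Q†) ≥ 0, attained at some Q*_𝒬 ∈ 𝒬. Then E_X[ (Q_θ(X) − Q†(X))² ] ≤ (1/2) · ( ε_approx + 2 ε_gen + ε_opt ); equivalently, the L2(D)-distance between Q_θ and Q† is at most sqrt( (1/2)(ε_approx + 2 ε_gen + ε_opt) ). -/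

import Mathlib

open MeasureTheory

/-- The log-loss `ℓ(p,y) = −y log p − (1−y) log(1−p)`. -/
noncomputable def logLoss (p y : ℝ) : ℝ :=
  -(y * Real.log p) - (1 - y) * Real.log (1 - p)

private lemma deriv_aux (p : ℝ) {t : ℝ} (ht0 : 0 < t) (ht1 : t < 1) :
    HasDerivAt (fun s => p * (Real.log p - Real.log s)
        + (1 - p) * (Real.log (1 - p) - Real.log (1 - s)) - 2 * (p - s) ^ 2)
      ((t - p) * (2 * t - 1) ^ 2 / (t * (1 - t))) t := by
  have h1 : HasDerivAt Real.log t⁻¹ t := Real.hasDerivAt_log ht0.ne'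
  have h1t : (1 : ℝ) - t ≠ 0 := by linarith
  have h2 : HasDerivAt (fun s : ℝ => Real.log (1 - s)) ((1 - t)⁻¹ * (-1)) t :=
    (Real.hasDerivAt_log h1t).comp t ((hasDerivAt_id t).const_sub 1)
  have h3 : HasDerivAt (fun s : ℝ => (p - s) ^ 2) (2 * (p - t) ^ 1 * (-1)) t :=
    ((hasDerivAt_id t).const_sub p).pow 2
  have h := ((((h1.const_sub (Real.log p)).const_mul p).add
      ((h2.const_sub (Real.log (1 - p))).const_mul (1 - p))).sub (h3.const_mul 2))
  refine h.congr_deriv ?_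
  have ht0' : t ≠ 0 := ht0.ne'
  field_simp
  ring

private lemma bern_pinsker {p q : ℝ} (hp : p ∈ Set.Ioo (0:ℝ) 1) (hq : q ∈ Set.Ioo (0:ℝ) 1) :
    2 * (p - q) ^ 2 ≤ p * (Real.log p - Real.log q)
      + (1 - p) * (Real.log (1 - p) - Real.log (1 - q)) := by
  set F : ℝ → ℝ := fun s => p * (Real.log p - Real.log s)
      + (1 - p) * (Real.log (1 - p) - Real.log (1 - s)) - 2 * (p - s) ^ 2 with hF
  have hFp : F p = 0 := by simp [hF]
  suffices h : 0 ≤ F q by simp only [hF] at h; linarith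
  have hIoo : ∀ {a b : ℝ}, a ∈ Set.Ioo (0:ℝ) 1 → b ∈ Set.Ioo (0:ℝ) 1 →
      Set.Icc a b ⊆ Set.Ioo (0:ℝ) 1 := by
    intro a b ha hb x hx
    exact ⟨lt_of_lt_of_le ha.1 hx.1, lt_of_le_of_lt hx.2 hb.2⟩
  rcases le_total p q with hpq | hpq
  · have hsub := hIoo hp hq
    have hmono : MonotoneOn F (Set.Icc p q) := by
      apply monotoneOn_of_deriv_nonneg (convex_Icc p q)
      · intro x hx
        exact (deriv_aux p (hsub hx).1 (hsub hx).2).continuousAt.continuousWithinAt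
      · intro x hx
        rw [interior_Icc] at hx
        have hx' := hsub (Set.Ioo_subset_Icc_self hx)
        exact (deriv_aux p hx'.1 hx'.2).differentiableAt.differentiableWithinAt
      · intro x hx
        rw [interior_Icc] at hx
        have hx' := hsub (Set.Ioo_subset_Icc_self hx)
        rw [(deriv_aux p hx'.1 hx'.2).deriv]
        apply div_nonneg
        · exact mul_nonneg (by linarith [hx.1]) (sq_nonneg _)
        · nlinarith [hx'.1, hx'.2]
    have := hmono (Set.left_mem_Icc.2 hpq) (Set.right_mem_Icc.2 hpq) hpq
    linarith [hFp ▸ this]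
  · have hsub := hIoo hq hp
    have hanti : AntitoneOn F (Set.Icc q p) := by
      apply antitoneOn_of_deriv_nonpos (convex_Icc q p)
      · intro x hx
        exact (deriv_aux p (hsub hx).1 (hsub hx).2).continuousAt.continuousWithinAt
      · intro x hx
        rw [interior_Icc] at hx
        have hx' := hsub (Set.Ioo_subset_Icc_self hx)
        exact (deriv_aux p hx'.1 hx'.2).differentiableAt.differentiableWithinAt
      · intro x hx
        rw [interior_Icc] at hx
        have hx' := hsub (Set.Ioo_subset_Icc_self hx)
        rw [(deriv_aux p hx'.1 hx'.2).deriv]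
        apply div_nonpos_of_nonpos_of_nonneg
        · exact mul_nonpos_of_nonpos_of_nonneg (by linarith [hx.2]) (sq_nonneg _)
        · nlinarith [hx'.1, hx'.2]
    have := hanti (Set.left_mem_Icc.2 hpq) (Set.right_mem_Icc.2 hpq) hpq
    linarith [hFp ▸ this]

/-- Key analytic step: twice the mean squared error is bounded by the excess risk. -/
private lemma excess_risk_bound
    {𝒳 Ω : Type*} [MeasurableSpace 𝒳] [MeasurableSpace Ω]
    (μ : Measure Ω) [IsProbabilityMeasure μ]
    (X : Ω → 𝒳) (hX : Measurable X)
    (Y : Ω → ℝ) (hYmeas : Measurable Y) (hY01 : ∀ᵐ ω ∂μ, Y ω ∈ Set.Icc (0 : ℝ) 1)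
    (Qdag : 𝒳 → ℝ) (hQdagMeas : Measurable Qdag)
    (hQdagCond : (fun ω => Qdag (X ω)) =ᵐ[μ] μ[Y | MeasurableSpace.comap X inferInstance])
    (hQdag01 : ∀ᵐ ω ∂μ, Qdag (X ω) ∈ Set.Ioo (0 : ℝ) 1)
    (τ : ℝ) (hτ : τ ∈ Set.Ioo (0 : ℝ) (1 / 2))
    (Qθ : 𝒳 → ℝ) (hQθmeas : Measurable Qθ)
    (hrange : ∀ x, Qθ x ∈ Set.Icc τ (1 - τ))
    (hintθ : Integrable (fun ω => logLoss (Qθ (X ω)) (Y ω)) μ)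
    (hintQdag : Integrable (fun ω => logLoss (Qdag (X ω)) (Y ω)) μ) :
    2 * (∫ ω, (Qθ (X ω) - Qdag (X ω)) ^ 2 ∂μ)
      ≤ (∫ ω, logLoss (Qθ (X ω)) (Y ω) ∂μ) - ∫ ω, logLoss (Qdag (X ω)) (Y ω) ∂μ := by
  simp only [logLoss] at hintθ hintQdag ⊢
  have hm0 := hX.comap_le
  have hτ0 : (0:ℝ) < τ := hτ.1
  have hτ1 : τ < 1/2 := hτ.2
  have hQθIoo : ∀ x, Qθ x ∈ Set.Ioo (0:ℝ) 1 := fun x =>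
    ⟨lt_of_lt_of_le hτ0 (hrange x).1, lt_of_le_of_lt (hrange x).2 (by linarith)⟩
  have hlogθ_bdd : ∀ x, |Real.log (Qθ x)| ≤ -Real.log τ := by
    intro x
    have h1 : Real.log τ ≤ Real.log (Qθ x) := Real.log_le_log hτ0 (hrange x).1
    have h2 : Real.log (Qθ x) < 0 := Real.log_neg (hQθIoo x).1 (hQθIoo x).2
    rw [abs_of_neg h2]; linarith
  have hlogθ_bdd' : ∀ x, |Real.log (1 - Qθ x)| ≤ -Real.log τ := by
    intro x
    have hpos : (0:ℝ) < 1 - Qθ x := by linarith [(hQθIoo x).2]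
    have h1 : Real.log τ ≤ Real.log (1 - Qθ x) := Real.log_le_log hτ0 (by linarith [(hrange x).2])
    have h2 : Real.log (1 - Qθ x) < 0 := Real.log_neg hpos (by linarith [(hQθIoo x).1])
    rw [abs_of_neg h2]; linarith
  have hplogp : ∀ p : ℝ, p ∈ Set.Ioo (0:ℝ) 1 → |p * Real.log p| ≤ 1 := by
    intro p hp
    have h2 : Real.log p < 0 := Real.log_neg hp.1 hp.2
    have h3 : Real.log p⁻¹ ≤ p⁻¹ - 1 := Real.log_le_sub_one_of_pos (inv_pos.2 hp.1)
    rw [Real.log_inv] at h3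
    have : -(p * Real.log p) ≤ 1 - p := by
      have := mul_le_mul_of_nonneg_left h3 hp.1.le
      rw [mul_sub, mul_inv_cancel₀ hp.1.ne'] at this
      linarith
    rw [abs_of_neg (by nlinarith [hp.1] : p * Real.log p < 0)]
    linarith [hp.1]
  have hmθX : Measurable fun ω => Qθ (X ω) := hQθmeas.comp hX
  have hmdX : Measurable fun ω => Qdag (X ω) := hQdagMeas.comp hX
  have hmlogθ : Measurable fun ω => Real.log (Qθ (X ω)) := Real.measurable_log.comp hmθX
  have hmlogθ' : Measurable fun ω => Real.log (1 - Qθ (X ω)) :=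
    Real.measurable_log.comp (measurable_const.sub hmθX)
  have hmlogd : Measurable fun ω => Real.log (Qdag (X ω)) := Real.measurable_log.comp hmdX
  have hmlogd' : Measurable fun ω => Real.log (1 - Qdag (X ω)) :=
    Real.measurable_log.comp (measurable_const.sub hmdX)
  have hYint : Integrable Y μ := by
    refine (integrable_const (1:ℝ)).mono' hYmeas.aestronglyMeasurable ?_
    filter_upwards [hY01] with ω h
    rw [Real.norm_eq_abs, abs_of_nonneg h.1]; exact h.2
  have hA : Integrable (fun ω => Y ω * Real.log (Qdag (X ω))) μ := by
    refine hintQdag.mono' (hYmeas.mul hmlogd).aestronglyMeasurable ?_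
    filter_upwards [hY01, hQdag01] with ω hy hp
    have hlp : Real.log (Qdag (X ω)) < 0 := Real.log_neg hp.1 hp.2
    have hlp' : Real.log (1 - Qdag (X ω)) < 0 :=
      Real.log_neg (by linarith [hp.2]) (by linarith [hp.1])
    rw [Real.norm_eq_abs, abs_of_nonpos (mul_nonpos_of_nonneg_of_nonpos hy.1 hlp.le)]
    nlinarith [hy.1, hy.2]
  have hC : Integrable (fun ω => (1 - Y ω) * Real.log (1 - Qdag (X ω))) μ := by
    refine hintQdag.mono' ((measurable_const.sub hYmeas).mul hmlogd').aestronglyMeasurable ?_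
    filter_upwards [hY01, hQdag01] with ω hy hp
    have hlp : Real.log (Qdag (X ω)) < 0 := Real.log_neg hp.1 hp.2
    have hlp' : Real.log (1 - Qdag (X ω)) < 0 :=
      Real.log_neg (by linarith [hp.2]) (by linarith [hp.1])
    rw [Real.norm_eq_abs,
      abs_of_nonpos (mul_nonpos_of_nonneg_of_nonpos (by linarith [hy.2]) hlp'.le)]
    nlinarith [hy.1, hy.2]
  have hB : Integrable (fun ω => Y ω * Real.log (Qθ (X ω))) μ := by
    refine (integrable_const (-Real.log τ)).mono' (hYmeas.mul hmlogθ).aestronglyMeasurable ?_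
    filter_upwards [hY01] with ω hy
    rw [Real.norm_eq_abs, abs_mul, abs_of_nonneg hy.1]
    calc Y ω * |Real.log (Qθ (X ω))| ≤ 1 * |Real.log (Qθ (X ω))| :=
          mul_le_mul_of_nonneg_right hy.2 (abs_nonneg _)
      _ ≤ -Real.log τ := by rw [one_mul]; exact hlogθ_bdd _
  have hB' : Integrable (fun ω => (1 - Y ω) * Real.log (1 - Qθ (X ω))) μ := by
    refine (integrable_const (-Real.log τ)).mono'
      ((measurable_const.sub hYmeas).mul hmlogθ').aestronglyMeasurable ?_
    filter_upwards [hY01] with ω hy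
    rw [Real.norm_eq_abs, abs_mul, abs_of_nonneg (by linarith [hy.2] : (0:ℝ) ≤ 1 - Y ω)]
    calc (1 - Y ω) * |Real.log (1 - Qθ (X ω))| ≤ 1 * |Real.log (1 - Qθ (X ω))| :=
          mul_le_mul_of_nonneg_right (by linarith [hy.1]) (abs_nonneg _)
      _ ≤ -Real.log τ := by rw [one_mul]; exact hlogθ_bdd' _
  set f : 𝒳 → ℝ := fun x => Real.log (Qdag x) - Real.log (Qθ x) with hfdef
  set g : 𝒳 → ℝ := fun x => Real.log (1 - Qdag x) - Real.log (1 - Qθ x) with hgdef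
  have hXm0 : Measurable[MeasurableSpace.comap X inferInstance] X :=
    measurable_iff_comap_le.mpr le_rfl
  have hfX_sm : StronglyMeasurable[MeasurableSpace.comap X inferInstance] fun ω => f (X ω) :=
    (((Real.measurable_log.comp hQdagMeas).sub
      (Real.measurable_log.comp hQθmeas)).comp hXm0).stronglyMeasurable
  have hgX_sm : StronglyMeasurable[MeasurableSpace.comap X inferInstance]
      fun ω => g (X ω) :=
    (((Real.measurable_log.comp (measurable_const.sub hQdagMeas)).sub
      (Real.measurable_log.comp (measurable_const.sub hQθmeas))).comp hXm0).stronglyMeasurable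
  have hfXY_eq : ((fun ω => f (X ω)) * Y)
      = fun ω => Y ω * Real.log (Qdag (X ω)) - Y ω * Real.log (Qθ (X ω)) := by
    funext ω; simp [hfdef]; ring
  have hfXY : Integrable ((fun ω => f (X ω)) * Y) μ := by rw [hfXY_eq]; exact hA.sub hB
  have hZ : Integrable (fun ω => 1 - Y ω) μ := (integrable_const (1:ℝ)).sub hYint
  have hgXZ_eq : ((fun ω => g (X ω)) * fun ω => 1 - Y ω)
      = fun ω => (1 - Y ω) * Real.log (1 - Qdag (X ω))
          - (1 - Y ω) * Real.log (1 - Qθ (X ω)) := by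
    funext ω; simp [hgdef]; ring
  have hgXZ : Integrable ((fun ω => g (X ω)) * fun ω => 1 - Y ω) μ := by
    rw [hgXZ_eq]; exact hC.sub hB'
  have hcondZ : (fun ω => 1 - Qdag (X ω))
      =ᵐ[μ] μ[(fun ω => 1 - Y ω) | MeasurableSpace.comap X inferInstance] := by
    have h1 : μ[(fun ω => 1 - Y ω) | MeasurableSpace.comap X inferInstance]
        =ᵐ[μ] μ[(fun _ => (1:ℝ)) | MeasurableSpace.comap X inferInstance]
          - μ[Y | MeasurableSpace.comap X inferInstance] := by
      have := condExp_sub (m := MeasurableSpace.comap X inferInstance) (μ := μ)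
        (integrable_const (1:ℝ)) hYint
      exact this
    have h2 : μ[(fun _ => (1:ℝ)) | MeasurableSpace.comap X inferInstance] = fun _ => (1:ℝ) :=
      condExp_const (μ := μ) hm0 (1:ℝ)
    filter_upwards [h1, hQdagCond] with ω h1ω h2ω
    rw [h1ω]
    simp [h2, h2ω]
  have key1 : ∫ ω, f (X ω) * Y ω ∂μ = ∫ ω, f (X ω) * Qdag (X ω) ∂μ := by
    have hmul := condExp_mul_of_stronglyMeasurable_left hfX_sm hfXY hYint
    calc ∫ ω, f (X ω) * Y ω ∂μ = ∫ ω, ((fun ω => f (X ω)) * Y) ω ∂μ := rfl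
      _ = ∫ ω, (μ[(fun ω => f (X ω)) * Y | MeasurableSpace.comap X inferInstance]) ω ∂μ :=
          (integral_condExp hm0).symm
      _ = ∫ ω, f (X ω) * Qdag (X ω) ∂μ := by
          refine integral_congr_ae ?_
          filter_upwards [hmul, hQdagCond] with ω h1ω h2ω
          simp only [Pi.mul_apply] at h1ω ⊢
          rw [h1ω, ← h2ω]
  have key2 : ∫ ω, g (X ω) * (1 - Y ω) ∂μ = ∫ ω, g (X ω) * (1 - Qdag (X ω)) ∂μ := by
    have hmul := condExp_mul_of_stronglyMeasurable_left hgX_sm hgXZ hZ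
    calc ∫ ω, g (X ω) * (1 - Y ω) ∂μ
        = ∫ ω, ((fun ω => g (X ω)) * fun ω => 1 - Y ω) ω ∂μ := rfl
      _ = ∫ ω, (μ[(fun ω => g (X ω)) * fun ω => 1 - Y ω
            | MeasurableSpace.comap X inferInstance]) ω ∂μ :=
          (integral_condExp hm0).symm
      _ = ∫ ω, g (X ω) * (1 - Qdag (X ω)) ∂μ := by
          refine integral_congr_ae ?_
          filter_upwards [hmul, hcondZ] with ω h1ω h2ω
          simp only [Pi.mul_apply] at h1ω ⊢
          rw [h1ω, ← h2ω]
  have hKL1 : Integrable (fun ω => f (X ω) * Qdag (X ω)) μ := by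
    refine (integrable_const (1 + -Real.log τ)).mono'
      ((((Real.measurable_log.comp hQdagMeas).sub
        (Real.measurable_log.comp hQθmeas)).comp hX).mul hmdX).aestronglyMeasurable ?_
    filter_upwards [hQdag01] with ω hp
    simp only [hfdef, Real.norm_eq_abs]
    calc |(Real.log (Qdag (X ω)) - Real.log (Qθ (X ω))) * Qdag (X ω)|
        = |Qdag (X ω) * Real.log (Qdag (X ω)) - Qdag (X ω) * Real.log (Qθ (X ω))| := by ring_nf
      _ ≤ |Qdag (X ω) * Real.log (Qdag (X ω))| + |Qdag (X ω) * Real.log (Qθ (X ω))| :=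
          abs_sub _ _
      _ ≤ 1 + -Real.log τ := by
          refine add_le_add (hplogp _ hp) ?_
          rw [abs_mul, abs_of_nonneg hp.1.le]
          calc Qdag (X ω) * |Real.log (Qθ (X ω))| ≤ 1 * |Real.log (Qθ (X ω))| :=
                mul_le_mul_of_nonneg_right hp.2.le (abs_nonneg _)
            _ ≤ -Real.log τ := by rw [one_mul]; exact hlogθ_bdd _
  have hKL2 : Integrable (fun ω => g (X ω) * (1 - Qdag (X ω))) μ := by
    refine (integrable_const (1 + -Real.log τ)).mono'
      ((((Real.measurable_log.comp (measurable_const.sub hQdagMeas)).sub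
        (Real.measurable_log.comp (measurable_const.sub hQθmeas))).comp hX).mul
        (measurable_const.sub hmdX)).aestronglyMeasurable ?_
    filter_upwards [hQdag01] with ω hp
    have hp' : (1 - Qdag (X ω)) ∈ Set.Ioo (0:ℝ) 1 := ⟨by linarith [hp.2], by linarith [hp.1]⟩
    simp only [hgdef, Real.norm_eq_abs]
    calc |(Real.log (1 - Qdag (X ω)) - Real.log (1 - Qθ (X ω))) * (1 - Qdag (X ω))|
        = |(1 - Qdag (X ω)) * Real.log (1 - Qdag (X ω))
            - (1 - Qdag (X ω)) * Real.log (1 - Qθ (X ω))| := by ring_nf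
      _ ≤ |(1 - Qdag (X ω)) * Real.log (1 - Qdag (X ω))|
            + |(1 - Qdag (X ω)) * Real.log (1 - Qθ (X ω))| := abs_sub _ _
      _ ≤ 1 + -Real.log τ := by
          refine add_le_add (hplogp _ hp') ?_
          rw [abs_mul, abs_of_nonneg hp'.1.le]
          calc (1 - Qdag (X ω)) * |Real.log (1 - Qθ (X ω))|
              ≤ 1 * |Real.log (1 - Qθ (X ω))| :=
                mul_le_mul_of_nonneg_right hp'.2.le (abs_nonneg _)
            _ ≤ -Real.log τ := by rw [one_mul]; exact hlogθ_bdd' _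
  have hsq : Integrable (fun ω => 2 * (Qθ (X ω) - Qdag (X ω)) ^ 2) μ := by
    refine (integrable_const (2:ℝ)).mono'
      ((((hmθX.sub hmdX).pow_const 2).const_mul 2).aestronglyMeasurable) ?_
    filter_upwards [hQdag01] with ω hp
    have h1 : |Qθ (X ω) - Qdag (X ω)| ≤ 1 := by
      have hq := hQθIoo (X ω)
      rw [abs_le]
      constructor <;> [linarith [hq.1, hp.2]; linarith [hq.2, hp.1]]
    have h2 : (Qθ (X ω) - Qdag (X ω)) ^ 2 ≤ 1 := by
      have h3 := abs_le.1 h1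
      nlinarith [h3.1, h3.2]
    rw [Real.norm_eq_abs, abs_of_nonneg (by positivity)]
    linarith
  -- main inequality chain
  have hchain : ∫ ω, (2 * (Qθ (X ω) - Qdag (X ω)) ^ 2) ∂μ
      ≤ ∫ ω, (f (X ω) * Qdag (X ω) + g (X ω) * (1 - Qdag (X ω))) ∂μ := by
    refine integral_mono_ae hsq (hKL1.add hKL2) ?_
    filter_upwards [hQdag01] with ω hp
    have hq := hQθIoo (X ω)
    have hbp := bern_pinsker hp hq
    have heq : f (X ω) * Qdag (X ω) + g (X ω) * (1 - Qdag (X ω))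
        = Qdag (X ω) * (Real.log (Qdag (X ω)) - Real.log (Qθ (X ω)))
          + (1 - Qdag (X ω)) * (Real.log (1 - Qdag (X ω)) - Real.log (1 - Qθ (X ω))) := by
      simp only [hfdef, hgdef]; ring
    have h2 : (2:ℝ) * (Qθ (X ω) - Qdag (X ω)) ^ 2 = 2 * (Qdag (X ω) - Qθ (X ω)) ^ 2 := by ring
    rw [heq, h2]
    exact hbp
  have hsplit : (∫ ω, (-(Y ω * Real.log (Qθ (X ω))) - (1 - Y ω) * Real.log (1 - Qθ (X ω))) ∂μ)
      - (∫ ω, (-(Y ω * Real.log (Qdag (X ω))) - (1 - Y ω) * Real.log (1 - Qdag (X ω))) ∂μ)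
      = ∫ ω, (f (X ω) * Qdag (X ω) + g (X ω) * (1 - Qdag (X ω))) ∂μ := by
    rw [← integral_sub hintθ hintQdag]
    have hptws : (fun ω => (-(Y ω * Real.log (Qθ (X ω))) - (1 - Y ω) * Real.log (1 - Qθ (X ω)))
          - (-(Y ω * Real.log (Qdag (X ω))) - (1 - Y ω) * Real.log (1 - Qdag (X ω))))
        = fun ω => f (X ω) * Y ω + g (X ω) * (1 - Y ω) := by
      funext ω; simp only [hfdef, hgdef]; ring
    have hfXY' : Integrable (fun ω => f (X ω) * Y ω) μ := hfXY
    have hgXZ' : Integrable (fun ω => g (X ω) * (1 - Y ω)) μ := hgXZ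
    rw [hptws, integral_add hfXY' hgXZ', key1, key2,
      ← integral_add hKL1 hKL2]
  have h2int : ∫ ω, (2 * (Qθ (X ω) - Qdag (X ω)) ^ 2) ∂μ
      = 2 * ∫ ω, (Qθ (X ω) - Qdag (X ω)) ^ 2 ∂μ := integral_const_mul 2 _
  linarith [hchain]

theorem bias_consistency
    {𝒳 Ω : Type*} [MeasurableSpace 𝒳] [MeasurableSpace Ω]
    (μ : Measure Ω) [IsProbabilityMeasure μ]
    (X : Ω → 𝒳) (hX : Measurable X)
    (Y : Ω → ℝ) (hYmeas : Measurable Y) (hY01 : ∀ᵐ ω ∂μ, Y ω ∈ Set.Icc (0 : ℝ) 1)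
    (Qdag : 𝒳 → ℝ) (hQdagMeas : Measurable Qdag)
    (hQdagCond : (fun ω => Qdag (X ω)) =ᵐ[μ] μ[Y | MeasurableSpace.comap X inferInstance])
    (hQdag01 : ∀ᵐ ω ∂μ, Qdag (X ω) ∈ Set.Ioo (0 : ℝ) 1)
    (τ : ℝ) (hτ : τ ∈ Set.Ioo (0 : ℝ) (1 / 2))
    (𝒬 : Set (𝒳 → ℝ))
    (hmeas : ∀ Q ∈ 𝒬, Measurable Q)
    (hrange : ∀ Q ∈ 𝒬, ∀ x, Q x ∈ Set.Icc τ (1 - τ))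
    (hint : ∀ Q ∈ 𝒬, Integrable (fun ω => logLoss (Q (X ω)) (Y ω)) μ)
    (hintQdag : Integrable (fun ω => logLoss (Qdag (X ω)) (Y ω)) μ)
    (m : ℕ) (hm : 0 < m) (S : Fin m → 𝒳 × ℝ)
    (εgen εopt εapprox : ℝ) (hεgen : 0 ≤ εgen) (hεopt : 0 ≤ εopt)
    -- (i) uniform deviation bound
    (hgen : ∀ Q ∈ 𝒬,
      |(∫ ω, logLoss (Q (X ω)) (Y ω) ∂μ)
          - (1 / (m : ℝ)) * ∑ i, logLoss (Q (S i).1) (S i).2| ≤ εgen)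
    -- (ii) approximate empirical risk minimization
    (Qθ : 𝒳 → ℝ) (hQθ : Qθ ∈ 𝒬)
    (hopt : ∀ Q ∈ 𝒬,
      (1 / (m : ℝ)) * ∑ i, logLoss (Qθ (S i).1) (S i).2
        ≤ (1 / (m : ℝ)) * ∑ i, logLoss (Q (S i).1) (S i).2 + εopt)
    -- (iii) in-class approximation error, attained at Qstar
    (Qstar : 𝒳 → ℝ) (hQstar : Qstar ∈ 𝒬)
    (hstar : ∀ Q ∈ 𝒬,
      (∫ ω, logLoss (Qstar (X ω)) (Y ω) ∂μ) ≤ ∫ ω, logLoss (Q (X ω)) (Y ω) ∂μ)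
    (happrox : εapprox = (∫ ω, logLoss (Qstar (X ω)) (Y ω) ∂μ)
        - ∫ ω, logLoss (Qdag (X ω)) (Y ω) ∂μ)
    (hεapprox : 0 ≤ εapprox) :
    (∫ ω, (Qθ (X ω) - Qdag (X ω)) ^ 2 ∂μ)
        ≤ (1 / 2) * (εapprox + 2 * εgen + εopt)
    ∧ Real.sqrt (∫ ω, (Qθ (X ω) - Qdag (X ω)) ^ 2 ∂μ)
        ≤ Real.sqrt ((1 / 2) * (εapprox + 2 * εgen + εopt)) := by
  have hkey := excess_risk_bound μ X hX Y hYmeas hY01 Qdag hQdagMeas hQdagCond hQdag01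
    τ hτ Qθ (hmeas Qθ hQθ) (hrange Qθ hQθ) (hint Qθ hQθ) hintQdag
  have g1 := abs_le.1 (hgen Qθ hQθ)
  have g2 := abs_le.1 (hgen Qstar hQstar)
  have o := hopt Qstar hQstar
  have hexcess : (∫ ω, logLoss (Qθ (X ω)) (Y ω) ∂μ) - ∫ ω, logLoss (Qdag (X ω)) (Y ω) ∂μ
      ≤ εapprox + 2 * εgen + εopt := by linarith [g1.1, g1.2, g2.1, g2.2]
  have hfirst : (∫ ω, (Qθ (X ω) - Qdag (X ω)) ^ 2 ∂μ)
      ≤ (1 / 2) * (εapprox + 2 * εgen + εopt) := by linarith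
  exact ⟨hfirst, Real.sqrt_le_sqrt hfirst⟩
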